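/- Let G be a finite simple graph and let v be a vertex of G of degree exactly 2 whose two neighbors are adjacent (i.e., v lies in a triangle). Then s(G − v) = s(G). -/

import Mathlib

open SimpleGraph

/-- `G` has a `K₄` minor (branch-set formulation: four nonempty, pairwise disjoint,
connected branch sets with an edge between every two of them). -/
def HasK4Minor {V : Type*} (G : SimpleGraph V) : Prop :=
  ∃ B : Fin 4 → Set V,
    (∀ i, (B i).Nonempty) ∧
    (∀ i, (G.induce (B i)).Connected) ∧
    (∀ i j, i ≠ j → Disjoint (B i) (B j)) ∧
    (∀ i j, i ≠ j → ∃ u ∈ B i, ∃ v ∈ B j, G.Adj u v)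

/-- `X` is a transversal of `G`: the graph `G − X` has no `K₄` minor. -/
def IsTransversal {V : Type*} (G : SimpleGraph V) (X : Finset V) : Prop :=
  ¬ HasK4Minor (G.induce ((↑X : Set V)ᶜ))

/-- `s(G)`: the minimum size of a transversal of `G`. -/
noncomputable def transNum {V : Type*} (G : SimpleGraph V) : ℕ :=
  sInf {n : ℕ | ∃ X : Finset V, X.card = n ∧ IsTransversal G X}

/- ### Auxiliary lemmas -/

lemma hasK4Minor_map {V W : Type*} {G : SimpleGraph V} {H : SimpleGraph W} (f : V → W)
    (hf : Function.Injective f) (ha : ∀ a b, G.Adj a b → H.Adj (f a) (f b))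
    (h : HasK4Minor G) : HasK4Minor H := by
  obtain ⟨B, hne, hconn, hdisj, hedge⟩ := h
  refine ⟨fun i => f '' B i, fun i => (hne i).image f, fun i => ?_, ?_, ?_⟩
  · refine Connected.map
      (⟨fun a => ⟨f a.1, ⟨a.1, a.2, rfl⟩⟩, fun hab => ha _ _ hab⟩ :
        G.induce (B i) →g H.induce (f '' B i)) ?_ (hconn i)
    rintro ⟨w, a, haB, rfl⟩
    exact ⟨⟨a, haB⟩, Subtype.ext rfl⟩
  · intro i j hij
    rw [Set.disjoint_left]
    rintro w ⟨a, haB, rfl⟩ ⟨b, hbB, hba⟩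
    cases hf hba
    exact ((hdisj i j hij).le_bot ⟨haB, hbB⟩)
  · intro i j hij
    obtain ⟨u, hu, w, hw, huw⟩ := hedge i j hij
    exact ⟨f u, ⟨u, hu, rfl⟩, f w, ⟨w, hw, rfl⟩, ha _ _ huw⟩

lemma walk_in_of_induce {V : Type*} {H : SimpleGraph V} {B : Set V} {u w : ↥B}
    (p : (H.induce B).Walk u w) : ∃ q : H.Walk u.1 w.1, ∀ z ∈ q.support, z ∈ B := by
  refine ⟨p.map ⟨Subtype.val, fun h => h⟩, ?_⟩
  intro z hz
  rw [SimpleGraph.Walk.support_map, List.mem_map] at hz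
  obtain ⟨a, _, rfl⟩ := hz
  exact a.2

lemma reachable_induce {V : Type*} {H : SimpleGraph V} (B : Set V) :
    ∀ {a b : V} (p : H.Walk a b), (∀ z ∈ p.support, z ∈ B) → ∀ (ha : a ∈ B) (hb : b ∈ B),
      (H.induce B).Reachable ⟨a, ha⟩ ⟨b, hb⟩ := by
  intro a b p
  induction p with
  | nil => intro _ ha hb; rfl
  | @cons a c b h q ih =>
    intro hs ha hb
    have hc : c ∈ B := hs c (by simp [SimpleGraph.Walk.support_cons])
    have h1 : (H.induce B).Adj ⟨a, ha⟩ ⟨c, hc⟩ := h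
    exact h1.reachable.trans (ih (fun z hz => hs z (by simp [SimpleGraph.Walk.support_cons, hz])) hc hb)

/-- walks can be rerouted around `v'` whose neighborhood is a clique. -/
lemma walk_avoid {V : Type*} {H : SimpleGraph V} {v' : V}
    (hclq : ∀ a b, H.Adj v' a → H.Adj v' b → a ≠ b → H.Adj a b) :
    ∀ (n : ℕ) {a b : V} (p : H.Walk a b), p.length ≤ n → a ≠ v' → b ≠ v' →
      ∃ q : H.Walk a b, (∀ z ∈ q.support, z ∈ p.support) ∧ v' ∉ q.support := by
  intro n
  induction n with
  | zero =>
    intro a b p hl ha _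
    cases p with
    | nil => exact ⟨.nil, by simp, by simp [ha.symm]⟩
    | cons h q => simp [SimpleGraph.Walk.length_cons] at hl
  | succ n ih =>
    intro a b p hl ha hb
    cases p with
    | nil => exact ⟨.nil, by simp, by simp [ha.symm]⟩
    | @cons a c b h q =>
      by_cases hc : c = v'
      · cases q with
        | nil => exact absurd hc hb
        | @cons c d b h2 r =>
          have h2 : H.Adj v' d := hc ▸ h2
          have h : H.Adj v' a := (hc ▸ h).symm
          have hd : d ≠ v' := h2.ne'
          have hlr : r.length ≤ n := by
            simp [SimpleGraph.Walk.length_cons] at hl; omega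
          obtain ⟨q', hq's, hq'v⟩ := ih r hlr hd hb
          by_cases had : a = d
          · subst had
            refine ⟨q', fun z hz => ?_, hq'v⟩
            simp [SimpleGraph.Walk.support_cons]
            right; right
            exact hq's z hz
          · have hadj : H.Adj a d := hclq a d h h2 had
            refine ⟨.cons hadj q', fun z hz => ?_, ?_⟩
            · rw [SimpleGraph.Walk.support_cons] at hz ⊢
              rcases List.mem_cons.mp hz with rfl | hz
              · exact List.mem_cons_self
              · simp [SimpleGraph.Walk.support_cons]
                right; right
                exact hq's z hz
            · rw [SimpleGraph.Walk.support_cons]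
              intro hmem
              rcases List.mem_cons.mp hmem with heq | hmem
              · exact ha heq.symm
              · exact hq'v hmem
      · have hlq : q.length ≤ n := by
          simp [SimpleGraph.Walk.length_cons] at hl; omega
        obtain ⟨q', hq's, hq'v⟩ := ih q hlq hc hb
        refine ⟨.cons h q', fun z hz => ?_, ?_⟩
        · rw [SimpleGraph.Walk.support_cons] at hz ⊢
          rcases List.mem_cons.mp hz with rfl | hz
          · exact List.mem_cons_self
          · exact List.mem_cons.mpr (Or.inr (hq's z hz))
        · rw [SimpleGraph.Walk.support_cons]
          intro hmem
          rcases List.mem_cons.mp hmem with heq | hmem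
          · exact ha heq.symm
          · exact hq'v hmem

/-- In a connected induced subgraph with at least two vertices, every vertex has a
neighbor inside. -/
lemma exists_adj_in {V : Type*} {H : SimpleGraph V} {B : Set V}
    (hB : (H.induce B).Connected) {a b : V} (ha : a ∈ B) (hb : b ∈ B) (hab : a ≠ b) :
    ∃ c ∈ B, H.Adj a c := by
  obtain ⟨p⟩ := hB.preconnected ⟨a, ha⟩ ⟨b, hb⟩
  cases p with
  | nil => exact absurd rfl hab
  | @cons _ c _ h q => exact ⟨c.1, c.2, h⟩

/-- The key surgery: if the neighborhood of `v'` is a clique of size ≤ 2, then a `K₄` minor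
of `H` yields one avoiding `v'`. -/
lemma surgery {V : Type*} {H : SimpleGraph V} {v' : V}
    (hclq : ∀ a b, H.Adj v' a → H.Adj v' b → a ≠ b → H.Adj a b)
    (hdeg : ∀ a b c, H.Adj v' a → H.Adj v' b → H.Adj v' c → a = b ∨ a = c ∨ b = c)
    (h : HasK4Minor H) : HasK4Minor (H.induce {u | u ≠ v'}) := by
  classical
  obtain ⟨B, hne, hconn, hdisj, hedge⟩ := h
  -- Step 1: any branch set containing v' contains another vertex.
  have hnontriv : ∀ i, v' ∈ B i → ∃ w ∈ B i, w ≠ v' := by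
    intro i hvi
    by_contra hcon
    push_neg at hcon
    have hBi : ∀ w ∈ B i, w = v' := hcon
    have hnbr : ∀ j, j ≠ i → ∃ w ∈ B j, H.Adj v' w := by
      intro j hj
      obtain ⟨u, hu, w, hw, huw⟩ := hedge i j (fun e => hj e.symm)
      exact ⟨w, hw, (hBi u hu) ▸ huw⟩
    have hio : ∀ k : Fin 4, k ≠ 0 → i + k ≠ i := by
      intro k hk he
      exact hk (add_eq_left.mp he)
    obtain ⟨w1, hw1, ha1⟩ := hnbr (i+1) (hio 1 (by decide))
    obtain ⟨w2, hw2, ha2⟩ := hnbr (i+2) (hio 2 (by decide))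
    obtain ⟨w3, hw3, ha3⟩ := hnbr (i+3) (hio 3 (by decide))
    have d12 : (i : Fin 4) + 1 ≠ i + 2 := by
      intro e; exact absurd (add_left_cancel e) (by decide)
    have d13 : (i : Fin 4) + 1 ≠ i + 3 := by
      intro e; exact absurd (add_left_cancel e) (by decide)
    have d23 : (i : Fin 4) + 2 ≠ i + 3 := by
      intro e; exact absurd (add_left_cancel e) (by decide)
    rcases hdeg w1 w2 w3 ha1 ha2 ha3 with rfl | rfl | rfl
    · exact (hdisj _ _ d12).le_bot ⟨hw1, hw2⟩
    · exact (hdisj _ _ d13).le_bot ⟨hw1, hw3⟩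
    · exact (hdisj _ _ d23).le_bot ⟨hw2, hw3⟩
  -- Step 2: the pruned branch sets
  set B' : Fin 4 → Set V := fun i => B i \ {v'} with hB'
  have hne' : ∀ i, (B' i).Nonempty := by
    intro i
    by_cases hv : v' ∈ B i
    · obtain ⟨w, hw, hwv⟩ := hnontriv i hv
      exact ⟨w, hw, hwv⟩
    · obtain ⟨w, hw⟩ := hne i
      exact ⟨w, hw, fun e => hv (e ▸ hw)⟩
  have hconn' : ∀ i, (H.induce (B' i)).Connected := by
    intro i
    obtain ⟨w0, hw0⟩ := hne' i
    haveI : Nonempty ↥(B' i) := ⟨⟨w0, hw0⟩⟩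
    refine ⟨fun a b => ?_⟩
    obtain ⟨pa⟩ := (hconn i).preconnected ⟨a.1, a.2.1⟩ ⟨b.1, b.2.1⟩
    obtain ⟨q, hq⟩ := walk_in_of_induce pa
    obtain ⟨q', hq's, hq'v⟩ := walk_avoid hclq q.length q le_rfl a.2.2 b.2.2
    have := reachable_induce (B' i) q' (fun z hz => ⟨hq z (hq's z hz), fun e => hq'v (e ▸ hz)⟩)
      a.2 b.2
    simpa using this
  have hdisj' : ∀ i j, i ≠ j → Disjoint (B' i) (B' j) :=
    fun i j hij => (hdisj i j hij).mono Set.diff_subset Set.diff_subset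
  have hedge' : ∀ i j, i ≠ j → ∃ u ∈ B' i, ∃ w ∈ B' j, H.Adj u w := by
    have key : ∀ i j, i ≠ j → ∀ u ∈ B i, ∀ w ∈ B j, H.Adj u w → u = v' →
        ∃ u' ∈ B' i, ∃ w' ∈ B' j, H.Adj u' w' := by
      intro i j hij u hu w hw huw huv
      have huw' : H.Adj v' w := huv ▸ huw
      have hvu : v' ∈ B i := huv ▸ hu
      have hwv : w ≠ v' := huw'.ne'
      obtain ⟨z, hz, hzv⟩ := hnontriv i hvu
      obtain ⟨c, hc, hvc⟩ := exists_adj_in (hconn i) hvu hz (Ne.symm hzv)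
      have hcv : c ≠ v' := hvc.ne'
      have hcw : c ≠ w := fun e => (hdisj i j hij).le_bot ⟨hc, e ▸ hw⟩
      exact ⟨c, ⟨hc, hcv⟩, w, ⟨hw, hwv⟩, hclq c w hvc huw' hcw⟩
    intro i j hij
    obtain ⟨u, hu, w, hw, huw⟩ := hedge i j hij
    by_cases huv : u = v'
    · exact key i j hij u hu w hw huw huv
    · by_cases hwv : w = v'
      · obtain ⟨w', hw', u', hu', h'⟩ := key j i (Ne.symm hij) w hw u hu huw.symm hwv
        exact ⟨u', hu', w', hw', h'.symm⟩
      · exact ⟨u, ⟨hu, huv⟩, w, ⟨hw, hwv⟩, huw⟩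
  -- Step 3: transfer into the induced graph on `{u | u ≠ v'}`.
  refine ⟨fun i => (Subtype.val) ⁻¹' (B' i), ?_, ?_, ?_, ?_⟩
  · intro i
    obtain ⟨w, hw⟩ := hne' i
    exact ⟨⟨w, hw.2⟩, hw⟩
  · intro i
    refine Connected.map
      (⟨fun a => ⟨⟨a.1, a.2.2⟩, a.2⟩, fun hab => hab⟩ :
        H.induce (B' i) →g (H.induce {u | u ≠ v'}).induce ((Subtype.val) ⁻¹' (B' i))) ?_
      (hconn' i)
    rintro ⟨⟨u, hu⟩, huB⟩
    exact ⟨⟨u, huB⟩, Subtype.ext (Subtype.ext rfl)⟩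
  · intro i j hij
    rw [Set.disjoint_left]
    intro w hwi hwj
    exact (hdisj' i j hij).le_bot ⟨hwi, hwj⟩
  · intro i j hij
    obtain ⟨u, hu, w, hw, huw⟩ := hedge' i j hij
    exact ⟨⟨u, hu.2⟩, hu, ⟨w, hw.2⟩, hw, huw⟩

/-- Removing a degree-2 vertex whose two neighbors are adjacent does not change `s(G)`. -/
theorem statement6 {V : Type*} [Fintype V] (G : SimpleGraph V) (v x y : V)
    (hxy : x ≠ y) (hN : G.neighborSet v = {x, y}) (hadj : G.Adj x y) :
    transNum (G.induce {u : V | u ≠ v}) = transNum G := by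
  classical
  set S : Set V := {u : V | u ≠ v} with hS
  -- both defining sets are nonempty
  have hnonemptyG : {n : ℕ | ∃ X : Finset V, X.card = n ∧ IsTransversal G X}.Nonempty := by
    refine ⟨(Finset.univ : Finset V).card, Finset.univ, rfl, ?_⟩
    rintro ⟨B, hne, -, -, -⟩
    obtain ⟨w, -⟩ := hne 0
    exact w.2 (by simp)
  have hnonemptyS : {n : ℕ | ∃ X : Finset ↥S, X.card = n ∧
      IsTransversal (G.induce S) X}.Nonempty := by
    refine ⟨(Finset.univ : Finset ↥S).card, Finset.univ, rfl, ?_⟩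
    rintro ⟨B, hne, -, -, -⟩
    obtain ⟨w, -⟩ := hne 0
    exact w.2 (by simp)
  apply le_antisymm
  · -- transNum (G - v) ≤ transNum G
    obtain ⟨X, hcard, hX⟩ := Nat.sInf_mem hnonemptyG
    set X' : Finset ↥S := X.subtype (· ∈ S) with hX'
    have hX'trans : IsTransversal (G.induce S) X' := by
      intro hmin
      apply hX
      refine hasK4Minor_map (fun w => ⟨w.1.1, ?_⟩) ?_ ?_ hmin
      · intro hmem
        exact w.2 (by simpa [hX', Finset.mem_coe, Finset.mem_subtype] using hmem)
      · intro a b hab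
        simp only [Subtype.mk.injEq] at hab
        exact Subtype.ext (Subtype.ext hab)
      · intro a b hab
        exact hab
    calc transNum (G.induce S) ≤ X'.card :=
          Nat.sInf_le ⟨X', rfl, hX'trans⟩
      _ ≤ X.card := by
          rw [hX', Finset.card_subtype]
          exact Finset.card_filter_le _ _
      _ = transNum G := hcard
  · -- transNum G ≤ transNum (G - v)
    obtain ⟨X, hcard, hX⟩ := Nat.sInf_mem hnonemptyS
    set X' : Finset V := X.map ⟨Subtype.val, Subtype.val_injective⟩ with hX'
    have hvX : v ∈ ((↑X' : Set V)ᶜ) := by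
      intro hv
      simp only [hX', Finset.coe_map, Set.mem_image, Finset.mem_coe] at hv
      obtain ⟨a, -, ha⟩ := hv
      exact a.2 ha
    set v' : ↥((↑X' : Set V)ᶜ) := ⟨v, hvX⟩ with hv'
    have hXtrans : IsTransversal G X' := by
      intro hmin
      have hnbr : ∀ a : ↥((↑X' : Set V)ᶜ), (G.induce ((↑X' : Set V)ᶜ)).Adj v' a →
          a.1 = x ∨ a.1 = y := by
        intro a hva
        have : a.1 ∈ G.neighborSet v := hva
        rw [hN] at this
        simpa using this
      have hclq : ∀ a b, (G.induce ((↑X' : Set V)ᶜ)).Adj v' a →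
          (G.induce ((↑X' : Set V)ᶜ)).Adj v' b → a ≠ b →
          (G.induce ((↑X' : Set V)ᶜ)).Adj a b := by
        intro a b hva hvb hab
        have hab' : a.1 ≠ b.1 := fun e => hab (Subtype.ext e)
        rcases hnbr a hva with ha | ha <;> rcases hnbr b hvb with hb | hb
        · exact absurd (ha.trans hb.symm) hab'
        · show G.Adj a.1 b.1; rw [ha, hb]; exact hadj
        · show G.Adj a.1 b.1; rw [ha, hb]; exact hadj.symm
        · exact absurd (ha.trans hb.symm) hab'
      have hdeg : ∀ a b c, (G.induce ((↑X' : Set V)ᶜ)).Adj v' a →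
          (G.induce ((↑X' : Set V)ᶜ)).Adj v' b → (G.induce ((↑X' : Set V)ᶜ)).Adj v' c →
          a = b ∨ a = c ∨ b = c := by
        intro a b c hva hvb hvc
        rcases hnbr a hva with ha | ha <;> rcases hnbr b hvb with hb | hb <;>
          rcases hnbr c hvc with hc | hc
        · exact Or.inl (Subtype.ext (ha.trans hb.symm))
        · exact Or.inl (Subtype.ext (ha.trans hb.symm))
        · exact Or.inr (Or.inl (Subtype.ext (ha.trans hc.symm)))
        · exact Or.inr (Or.inr (Subtype.ext (hb.trans hc.symm)))
        · exact Or.inr (Or.inr (Subtype.ext (hb.trans hc.symm)))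
        · exact Or.inr (Or.inl (Subtype.ext (ha.trans hc.symm)))
        · exact Or.inl (Subtype.ext (ha.trans hb.symm))
        · exact Or.inl (Subtype.ext (ha.trans hb.symm))
      have hmin2 := surgery hclq hdeg hmin
      apply hX
      refine hasK4Minor_map (fun w => ⟨⟨w.1.1, ?_⟩, ?_⟩) ?_ ?_ hmin2
      · intro e
        exact w.2 (Subtype.ext e)
      · intro hmem
        apply w.1.2
        simp only [hX', Finset.coe_map, Set.mem_image, Finset.mem_coe]
        exact ⟨⟨w.1.1, _⟩, hmem, rfl⟩
      · intro a b hab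
        simp only [Subtype.mk.injEq] at hab
        exact Subtype.ext (Subtype.ext hab)
      · intro a b hab
        exact hab
    calc transNum G ≤ X'.card := Nat.sInf_le ⟨X', rfl, hXtrans⟩
      _ = X.card := Finset.card_map _
      _ = transNum (G.induce S) := hcard
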